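/- Vanishing of the arc integral of f(z)/z for Hardy class functions (Proposition B.2 of the paper): Let 1 ≤ p < ∞ and let f be of Hardy class from below of order p. Then ∫_{1/r}^{π - 1/r} |f(-r e^{iθ})| dθ → 0 as r → ∞. (This integral equals the integral of |f(z)/z| |dz| over the truncated semicircular arc of radius r in the lower half-plane.) -/

import Mathlib

open MeasureTheory Complex Filter Set
open scoped ENNReal NNReal

noncomputable section

/-- `f` is of Hardy class from below of order `p`: holomorphic on the open lower
half-plane, each horizontal slice is in `L^p(ℝ)`, with uniformly bounded `L^p` integrals. -/
def HardyBelow (p : ℝ) (f : ℂ → ℂ) : Prop :=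
  (∀ z : ℂ, z.im < 0 → DifferentiableAt ℂ f z) ∧
  (∀ y : ℝ, y < 0 → MemLp (fun x : ℝ => f (x + y * Complex.I)) (ENNReal.ofReal p) volume) ∧
  ∃ C : ℝ, ∀ y : ℝ, y < 0 → (∫ x : ℝ, ‖f (x + y * Complex.I)‖ ^ p) ≤ C

/-- `f₀ ∈ L^p(ℝ)` is the boundary value of `f` from below:
`f (x + iy) → f₀ x` as `y → 0⁻` for a.e. `x`. -/
def IsBoundaryValueBelow (p : ℝ) (f : ℂ → ℂ) (f₀ : ℝ → ℂ) : Prop :=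
  MemLp f₀ (ENNReal.ofReal p) volume ∧
  ∀ᵐ x : ℝ, Filter.Tendsto (fun y : ℝ => f (x + y * Complex.I))
    (nhdsWithin 0 (Set.Iio 0)) (nhds (f₀ x))

private lemma circle_submean (p : ℝ) (hp : 1 ≤ p) (f : ℂ → ℂ) (z : ℂ) (R : ℝ) (hR : 0 < R)
    (hd : ∀ w ∈ Metric.closedBall z R, DifferentiableAt ℂ f w) :
    2 * Real.pi * ‖f z‖ ^ p ≤ ∫ θ in Set.Ioo (-Real.pi) Real.pi, ‖f (circleMap z R θ)‖ ^ p := by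
  have hπ := Real.pi_pos
  have hp0 : (0:ℝ) ≤ p := by linarith
  have hu : Continuous fun θ : ℝ => f (circleMap z R θ) :=
    continuous_iff_continuousAt.2 fun θ =>
      ((hd _ (circleMap_mem_closedBall z hR.le θ)).continuousAt).comp
        (continuous_circleMap z R).continuousAt
  -- Cauchy integral formula
  have hC : (∮ w in C(z, R), (w - z)⁻¹ • f w) = (2 * (Real.pi:ℂ) * Complex.I) • f z :=
    DifferentiableOn.circleIntegral_sub_inv_smul
      (fun w hw => (hd w hw).differentiableWithinAt) (Metric.mem_ball_self hR)
  have key : (∫ θ in (0:ℝ)..(2*Real.pi), f (circleMap z R θ)) = ((2 * Real.pi : ℝ) : ℂ) * f z := by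
    have h1 : (∮ w in C(z, R), (w - z)⁻¹ • f w)
        = ∫ θ in (0:ℝ)..(2*Real.pi), Complex.I * f (circleMap z R θ) := by
      rw [circleIntegral]
      refine intervalIntegral.integral_congr fun θ _ => ?_
      have hne : circleMap 0 R θ ≠ 0 := by
        have := circleMap_ne_center (c := (0:ℂ)) hR.ne' (θ := θ)
        simpa using this
      simp only [deriv_circleMap, circleMap_sub_center, smul_eq_mul]
      field_simp
    rw [h1, intervalIntegral.integral_const_mul] at hC
    have hIne : (Complex.I : ℂ) ≠ 0 := Complex.I_ne_zero
    have : Complex.I * (∫ θ in (0:ℝ)..(2*Real.pi), f (circleMap z R θ))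
        = Complex.I * (((2 * Real.pi : ℝ) : ℂ) * f z) := by
      rw [hC]; rw [smul_eq_mul]; push_cast; ring
    exact mul_left_cancel₀ hIne this
  -- norm inequality
  have hnorm : 2 * Real.pi * ‖f z‖ ≤ ∫ θ in Set.Ioc 0 (2*Real.pi), ‖f (circleMap z R θ)‖ := by
    have h2 : ‖∫ θ in (0:ℝ)..(2*Real.pi), f (circleMap z R θ)‖
        ≤ ∫ θ in (0:ℝ)..(2*Real.pi), ‖f (circleMap z R θ)‖ :=
      intervalIntegral.norm_integral_le_integral_norm (by positivity)
    rw [key] at h2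
    rw [intervalIntegral.integral_of_le (by positivity)] at h2
    calc 2 * Real.pi * ‖f z‖ = ‖((2 * Real.pi : ℝ) : ℂ) * f z‖ := by
          rw [norm_mul, Complex.norm_real, Real.norm_eq_abs, _root_.abs_of_nonneg (by positivity : (0:ℝ) ≤ 2 * Real.pi)]
      _ ≤ _ := h2
  -- Jensen's inequality
  set u : ℝ → ℝ := fun θ => ‖f (circleMap z R θ)‖ with hu_def
  have hucont : Continuous u := hu.norm
  have hupcont : Continuous fun θ => u θ ^ p := (Real.continuous_rpow_const hp0).comp hucont
  have hμ : volume (Set.Ioc (0:ℝ) (2*Real.pi)) = ENNReal.ofReal (2*Real.pi) := by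
    simp [Real.volume_Ioc]
  have havg : ‖f z‖ ≤ ⨍ θ in Set.Ioc 0 (2*Real.pi), u θ := by
    rw [setAverage_eq, measureReal_def, hμ, ENNReal.toReal_ofReal (by positivity), smul_eq_mul,
      inv_mul_eq_div, le_div_iff₀ (by positivity)]
    linarith [hnorm]
  have hjensen : (⨍ θ in Set.Ioc 0 (2*Real.pi), u θ) ^ p
      ≤ ⨍ θ in Set.Ioc 0 (2*Real.pi), u θ ^ p := by
    refine ConvexOn.map_set_average_le (μ := volume) (t := Set.Ioc (0:ℝ) (2*Real.pi))
      (convexOn_rpow hp) ((Real.continuous_rpow_const hp0).continuousOn) isClosed_Ici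
      ?_ ?_ (Filter.Eventually.of_forall fun θ => norm_nonneg _)
      (hucont.integrableOn_Ioc) (hupcont.integrableOn_Ioc)
    · rw [hμ]; simp [Real.pi_pos]
    · rw [hμ]; exact ENNReal.ofReal_ne_top
  have hIoc : 2 * Real.pi * ‖f z‖ ^ p ≤ ∫ θ in Set.Ioc 0 (2*Real.pi), u θ ^ p := by
    have h3 : ‖f z‖ ^ p ≤ ⨍ θ in Set.Ioc 0 (2*Real.pi), u θ ^ p :=
      le_trans (Real.rpow_le_rpow (norm_nonneg _) havg hp0) hjensen
    rw [setAverage_eq, measureReal_def, hμ, ENNReal.toReal_ofReal (by positivity), smul_eq_mul,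
      inv_mul_eq_div, le_div_iff₀ (by positivity)] at h3
    linarith
  -- periodicity: shift integral from (0, 2π] to (-π, π)
  have hper : Function.Periodic (fun θ => u θ ^ p) (2*Real.pi) := fun θ => by
    simp only [hu_def, (periodic_circleMap z R) θ]
  have hshift : ∫ θ in Set.Ioc 0 (2*Real.pi), u θ ^ p
      = ∫ θ in Set.Ioo (-Real.pi) Real.pi, u θ ^ p := by
    have e1 : ∫ θ in Set.Ioc 0 (2*Real.pi), u θ ^ p
        = ∫ θ in (0:ℝ)..(0 + 2*Real.pi), u θ ^ p := by
      rw [intervalIntegral.integral_of_le (by positivity)]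
      norm_num
    have e2 : ∫ θ in (-Real.pi)..(-Real.pi + 2*Real.pi), u θ ^ p
        = ∫ θ in Set.Ioo (-Real.pi) Real.pi, u θ ^ p := by
      rw [show -Real.pi + 2*Real.pi = Real.pi by ring,
        intervalIntegral.integral_of_le (by linarith), integral_Ioc_eq_integral_Ioo]
    rw [e1, hper.intervalIntegral_add_eq 0 (-Real.pi), e2]
  rw [← hshift]
  exact hIoc

private lemma pointwise_bound (p : ℝ) (hp : 1 ≤ p) (f : ℂ → ℂ) (hf : HardyBelow p f) :
    ∃ K : ℝ, 0 ≤ K ∧ ∀ z : ℂ, z.im < 0 → ‖f z‖ ^ p ≤ K / (-z.im) := by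
  obtain ⟨hdiff, hmem, C, hC⟩ := hf
  have hp0 : (0:ℝ) ≤ p := by linarith
  have hπ := Real.pi_pos
  have hC0 : (0:ℝ) ≤ C := by
    have h1 := hC (-1) (by norm_num)
    have h2 : 0 ≤ ∫ x : ℝ, ‖f (x + ((-1:ℝ):ℂ) * Complex.I)‖ ^ p :=
      integral_nonneg fun x => Real.rpow_nonneg (norm_nonneg _) p
    linarith
  refine ⟨4 * C / Real.pi, by positivity, fun z hz => ?_⟩
  set R₀ : ℝ := -z.im / 2 with hR₀def
  have hR₀ : 0 < R₀ := by rw [hR₀def]; linarith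
  have hball : ∀ w : ℂ, w ∈ Metric.closedBall z R₀ → w.im < 0 := by
    intro w hw
    have h1 : |w.im - z.im| ≤ ‖w - z‖ := by
      simpa [Complex.sub_im] using Complex.abs_im_le_norm (w - z)
    have h2 : ‖w - z‖ ≤ R₀ := by
      simpa [Metric.mem_closedBall, Complex.dist_eq] using hw
    have h3 := (abs_le.1 (h1.trans h2)).2
    rw [hR₀def] at h3
    linarith
  have hcball : ∀ w ∈ Metric.closedBall z R₀, DifferentiableAt ℂ f w :=
    fun w hw => hdiff w (hball w hw)
  have hcont : ContinuousOn f (Metric.closedBall z R₀) := fun w hw =>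
    (hcball w hw).continuousAt.continuousWithinAt
  -- the local p-power function
  set h : ℂ → ℝ := fun w => ‖f (z + w)‖ ^ p with hhdef
  have hhcont : ContinuousOn h (Metric.closedBall 0 R₀) := by
    apply (Real.continuous_rpow_const hp0).comp_continuousOn
    apply ContinuousOn.norm
    apply hcont.comp (continuous_const.add continuous_id).continuousOn
    intro w hw
    simp only [Metric.mem_closedBall, Complex.dist_eq] at hw ⊢
    simpa using hw
  have hh_int : IntegrableOn h (Metric.ball 0 R₀) volume :=
    (hhcont.integrableOn_compact (isCompact_closedBall 0 R₀)).mono_set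
      Metric.ball_subset_closedBall
  have hh_nonneg : ∀ w, 0 ≤ h w := fun w => Real.rpow_nonneg (norm_nonneg _) p
  -- polar coordinates
  set F : ℂ → ℝ := (Metric.ball (0:ℂ) R₀).indicator h with hFdef
  set S : Set (ℝ × ℝ) := Set.Ioo 0 R₀ ×ˢ Set.Ioo (-Real.pi) Real.pi with hSdef
  set G : ℝ × ℝ → ℝ := fun q => q.1 * h (Complex.polarCoord.symm q) with hGdef
  have hpolar0 : (∫ q in _root_.polarCoord.target, q.1 • F (Complex.polarCoord.symm q))
      = ∫ w, F w := Complex.integral_comp_polarCoord_symm F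
  have habs : ∀ q : ℝ × ℝ, ‖Complex.polarCoord.symm q‖ = |q.1| :=
    Complex.norm_polarCoord_symm
  have htarget : _root_.polarCoord.target = Set.Ioi (0:ℝ) ×ˢ Set.Ioo (-Real.pi) Real.pi :=
    rfl
  have hsub : S ⊆ _root_.polarCoord.target := by
    rw [htarget, hSdef]
    exact Set.prod_mono Set.Ioo_subset_Ioi_self subset_rfl
  have hpolar1 : (∫ q in _root_.polarCoord.target, q.1 • F (Complex.polarCoord.symm q))
      = ∫ q in S, q.1 • F (Complex.polarCoord.symm q) := by
    apply setIntegral_eq_of_subset_of_forall_diff_eq_zero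
      (htarget ▸ (measurableSet_Ioi.prod measurableSet_Ioo)) hsub
    rintro ⟨r, θ⟩ ⟨hq1, hq2⟩
    rw [htarget] at hq1
    have hr : 0 < r := hq1.1
    have hrR : ¬ r < R₀ := by
      intro hcon
      exact hq2 ⟨⟨hr, hcon⟩, hq1.2⟩
    have hF0 : F (Complex.polarCoord.symm (r, θ)) = 0 := by
      apply Set.indicator_of_notMem
      simp only [Metric.mem_ball, Complex.dist_eq, sub_zero, habs (r, θ)]
      rw [abs_of_pos hr]
      exact hrR
    show (r, θ).1 • F (Complex.polarCoord.symm (r, θ)) = 0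
    rw [hF0, smul_zero]
  have hpolar2 : (∫ q in S, q.1 • F (Complex.polarCoord.symm q)) = ∫ q in S, G q := by
    apply setIntegral_congr_fun (measurableSet_Ioo.prod measurableSet_Ioo)
    rintro ⟨r, θ⟩ hq
    have hmem' : Complex.polarCoord.symm (r, θ) ∈ Metric.ball (0:ℂ) R₀ := by
      simp only [Metric.mem_ball, Complex.dist_eq, sub_zero, habs (r, θ)]
      rw [abs_of_pos hq.1.1]
      exact hq.1.2
    show (r, θ).1 • F (Complex.polarCoord.symm (r, θ)) = G (r, θ)
    simp only [smul_eq_mul, hGdef, hFdef]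
    rw [Set.indicator_of_mem hmem']
  have hFint : ∫ w, F w = ∫ w in Metric.ball (0:ℂ) R₀, h w :=
    integral_indicator measurableSet_ball
  -- continuity/integrability of G
  have hsymm_cont : Continuous fun q : ℝ × ℝ => Complex.polarCoord.symm q := by
    simp only [Complex.polarCoord_symm_apply]
    fun_prop
  have hGcont : ContinuousOn G (Set.Icc 0 R₀ ×ˢ Set.Icc (-Real.pi) Real.pi) := by
    apply ContinuousOn.mul continuous_fst.continuousOn
    apply hhcont.comp hsymm_cont.continuousOn
    rintro ⟨r, θ⟩ hq
    simp only [Metric.mem_closedBall, Complex.dist_eq, sub_zero, habs (r, θ)]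
    rw [_root_.abs_of_nonneg hq.1.1]
    exact hq.1.2
  have hGint : IntegrableOn G S volume := by
    apply (hGcont.integrableOn_compact (isCompact_Icc.prod isCompact_Icc)).mono_set
    exact Set.prod_mono Set.Ioo_subset_Icc_self Set.Ioo_subset_Icc_self
  have hGint' : Integrable G (((volume : Measure ℝ).restrict (Set.Ioo 0 R₀)).prod
      ((volume : Measure ℝ).restrict (Set.Ioo (-Real.pi) Real.pi))) := by
    rw [Measure.prod_restrict, ← Measure.volume_eq_prod]
    exact hGint
  have hfub : ∫ q in S, G q
      = ∫ r in Set.Ioo 0 R₀, ∫ θ in Set.Ioo (-Real.pi) Real.pi, G (r, θ) := by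
    rw [hSdef, show ((volume : Measure (ℝ×ℝ)).restrict
        (Set.Ioo 0 R₀ ×ˢ Set.Ioo (-Real.pi) Real.pi))
      = (((volume : Measure ℝ).restrict (Set.Ioo 0 R₀)).prod
        ((volume : Measure ℝ).restrict (Set.Ioo (-Real.pi) Real.pi))) from by
        rw [Measure.prod_restrict, ← Measure.volume_eq_prod]]
    exact integral_prod G hGint'
  -- the circle submean bound on each radius
  have hinner : ∀ r ∈ Set.Ioo (0:ℝ) R₀, (2 * Real.pi * ‖f z‖ ^ p) * r
      ≤ ∫ θ in Set.Ioo (-Real.pi) Real.pi, G (r, θ) := by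
    intro r hr
    have hcm : ∀ θ : ℝ, z + Complex.polarCoord.symm (r, θ) = circleMap z r θ := by
      intro θ
      rw [Complex.polarCoord_symm_apply, circleMap, Complex.exp_mul_I]
      push_cast
      ring
    have hGval : ∫ θ in Set.Ioo (-Real.pi) Real.pi, G (r, θ)
        = r * ∫ θ in Set.Ioo (-Real.pi) Real.pi, ‖f (circleMap z r θ)‖ ^ p := by
      rw [← integral_const_mul]
      apply setIntegral_congr_fun measurableSet_Ioo
      intro θ _
      rw [hGdef]
      simp only [hhdef, hcm θ]
    rw [hGval]
    have hsub2 := circle_submean p hp f z r hr.1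
      (fun w hw => hcball w (Metric.closedBall_subset_closedBall hr.2.le hw))
    calc (2 * Real.pi * ‖f z‖ ^ p) * r = r * (2 * Real.pi * ‖f z‖ ^ p) := by ring
      _ ≤ _ := mul_le_mul_of_nonneg_left hsub2 hr.1.le
  -- integrate over radii
  have houter : Real.pi * R₀^2 * ‖f z‖ ^ p ≤ ∫ q in S, G q := by
    rw [hfub]
    have hint1 : IntegrableOn (fun r : ℝ => (2 * Real.pi * ‖f z‖ ^ p) * r)
        (Set.Ioo 0 R₀) volume :=
      (((continuous_const.mul continuous_id).continuousOn).integrableOn_compact isCompact_Icc).mono_set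
        Set.Ioo_subset_Icc_self
    have h1 := setIntegral_mono_on hint1 hGint'.integral_prod_left measurableSet_Ioo hinner
    have h2 : ∫ r in Set.Ioo 0 R₀, (2 * Real.pi * ‖f z‖ ^ p) * r
        = (2 * Real.pi * ‖f z‖ ^ p) * (R₀^2 / 2) := by
      rw [integral_const_mul]
      congr 1
      rw [← integral_Ioc_eq_integral_Ioo, ← intervalIntegral.integral_of_le hR₀.le,
        integral_id]
      ring
    rw [h2] at h1
    calc Real.pi * R₀^2 * ‖f z‖ ^ p = (2 * Real.pi * ‖f z‖ ^ p) * (R₀^2 / 2) := by ring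
      _ ≤ _ := h1
  have hkey1 : Real.pi * R₀^2 * ‖f z‖ ^ p ≤ ∫ w in Metric.ball (0:ℂ) R₀, h w := by
    rw [← hFint, ← hpolar0, hpolar1, hpolar2]
    exact houter
  -- strip bound via lintegrals
  set Strip : Set ℂ := {w : ℂ | w.im ∈ Set.Ioo (-R₀) R₀} with hStripdef
  set g : ℂ → ℝ≥0∞ := fun w => ENNReal.ofReal (h w) with hgdef
  have hofReal : ENNReal.ofReal (∫ w in Metric.ball (0:ℂ) R₀, h w)
      = ∫⁻ w in Metric.ball (0:ℂ) R₀, g w :=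
    ofReal_integral_eq_lintegral_ofReal hh_int
      (Filter.Eventually.of_forall fun w => hh_nonneg w)
  have hball_sub : Metric.ball (0:ℂ) R₀ ⊆ Strip := by
    intro w hw
    have h1 : |w.im| ≤ ‖w‖ := Complex.abs_im_le_norm w
    have h2 : ‖w‖ < R₀ := by
      simpa [Metric.mem_ball, Complex.dist_eq] using hw
    have h3 := abs_lt.1 (lt_of_le_of_lt h1 h2)
    exact ⟨h3.1, h3.2⟩
  have hmono : ∫⁻ w in Metric.ball (0:ℂ) R₀, g w ≤ ∫⁻ w in Strip, g w :=
    lintegral_mono_set hball_sub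
  have hpre : (Complex.measurableEquivRealProd.symm) ⁻¹' Strip
      = Set.univ ×ˢ Set.Ioo (-R₀) R₀ := by
    ext q
    simp [hStripdef, Complex.measurableEquivRealProd_symm_apply]
  have htrans : ∫⁻ w in Strip, g w
      = ∫⁻ q in Set.univ ×ˢ Set.Ioo (-R₀) R₀,
          g (Complex.measurableEquivRealProd.symm q) := by
    rw [← hpre]
    exact ((Complex.volume_preserving_equiv_real_prod.symm
        Complex.measurableEquivRealProd).setLIntegral_comp_preimage_emb
      Complex.measurableEquivRealProd.symm.measurableEmbedding g Strip).symm
  have hrw : (volume : Measure (ℝ×ℝ)).restrict (Set.univ ×ˢ Set.Ioo (-R₀) R₀)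
      = ((volume : Measure ℝ).prod ((volume : Measure ℝ).restrict (Set.Ioo (-R₀) R₀))) := by
    rw [Measure.volume_eq_prod, ← Measure.prod_restrict, Measure.restrict_univ]
  have hmeasG2 : AEMeasurable (fun q : ℝ × ℝ => g (Complex.measurableEquivRealProd.symm q))
      ((volume : Measure ℝ).prod ((volume : Measure ℝ).restrict (Set.Ioo (-R₀) R₀))) := by
    rw [← hrw]
    apply ContinuousOn.aemeasurable _ (MeasurableSet.univ.prod measurableSet_Ioo)
    intro q hq
    apply ContinuousAt.continuousWithinAt
    have him : (z + Complex.measurableEquivRealProd.symm q).im < 0 := by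
      rw [Complex.measurableEquivRealProd_symm_apply]
      have h1 : q.2 < R₀ := hq.2.2
      rw [hR₀def] at h1
      simp only [Complex.add_im, Complex.add_im, Complex.ofReal_im, Complex.mul_im,
        Complex.I_im, Complex.I_re, Complex.ofReal_re]
      simp
      linarith
    have c0 : Continuous fun q : ℝ × ℝ => Complex.measurableEquivRealProd.symm q := by
      simp only [Complex.measurableEquivRealProd_symm_apply, Complex.mk_eq_add_mul_I]
      fun_prop
    have c4 : ContinuousAt (fun w : ℂ => ENNReal.ofReal (‖f (z + w)‖ ^ p))
        (Complex.measurableEquivRealProd.symm q) := by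
      have c5 : ContinuousAt (fun w : ℂ => f (z + w))
          (Complex.measurableEquivRealProd.symm q) :=
        (hdiff _ him).continuousAt.comp (continuous_const.add continuous_id).continuousAt
      exact ENNReal.continuous_ofReal.continuousAt.comp ((c5.norm).rpow_const (Or.inr hp0))
    exact c4.comp c0.continuousAt
  have hTon : (∫⁻ q in Set.univ ×ˢ Set.Ioo (-R₀) R₀,
        g (Complex.measurableEquivRealProd.symm q))
      = ∫⁻ y in Set.Ioo (-R₀) R₀, ∫⁻ x : ℝ,
          g (Complex.measurableEquivRealProd.symm (x, y)) := by
    rw [hrw]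
    exact lintegral_prod_symm _ hmeasG2
  have hslice : ∀ y ∈ Set.Ioo (-R₀) R₀,
      (∫⁻ x : ℝ, g (Complex.measurableEquivRealProd.symm (x, y))) ≤ ENNReal.ofReal C := by
    intro y hy
    have hy2 : y < R₀ := hy.2
    have hy' : z.im + y < 0 := by
      rw [hR₀def] at hy2
      linarith
    have hcongr : ∀ x : ℝ, g (Complex.measurableEquivRealProd.symm (x, y))
        = (fun t : ℝ => ENNReal.ofReal (‖f ((t:ℂ) + ((z.im + y : ℝ):ℂ) * Complex.I)‖ ^ p))
          (z.re + x) := by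
      intro x
      have heq : z + Complex.measurableEquivRealProd.symm (x, y)
          = ((z.re + x : ℝ) : ℂ) + ((z.im + y : ℝ) : ℂ) * Complex.I := by
        rw [Complex.measurableEquivRealProd_symm_apply]
        apply Complex.ext <;> simp
      simp only [hgdef, hhdef, heq]
    simp_rw [hcongr]
    rw [lintegral_add_left_eq_self
      (fun t : ℝ => ENNReal.ofReal (‖f ((t:ℂ) + ((z.im + y : ℝ):ℂ) * Complex.I)‖ ^ p)) z.re]
    have hint : Integrable (fun x : ℝ => ‖f ((x:ℂ) + ((z.im + y : ℝ):ℂ) * Complex.I)‖ ^ p) := by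
      have h7 := (hmem (z.im + y) hy').integrable_norm_rpow
        (by simp [ENNReal.ofReal_eq_zero]; linarith) ENNReal.ofReal_ne_top
      rwa [ENNReal.toReal_ofReal hp0] at h7
    rw [← ofReal_integral_eq_lintegral_ofReal hint
      (Filter.Eventually.of_forall fun x => Real.rpow_nonneg (norm_nonneg _) p)]
    exact ENNReal.ofReal_le_ofReal (hC (z.im + y) hy')
  have hstrip : (∫⁻ y in Set.Ioo (-R₀) R₀, ∫⁻ x : ℝ,
        g (Complex.measurableEquivRealProd.symm (x, y)))
      ≤ ENNReal.ofReal C * ENNReal.ofReal (2 * R₀) := by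
    calc (∫⁻ y in Set.Ioo (-R₀) R₀, ∫⁻ x : ℝ,
        g (Complex.measurableEquivRealProd.symm (x, y)))
        ≤ ∫⁻ _ in Set.Ioo (-R₀) R₀, ENNReal.ofReal C :=
          setLIntegral_mono' measurableSet_Ioo hslice
      _ = ENNReal.ofReal C * volume (Set.Ioo (-R₀) R₀) := setLIntegral_const _ _
      _ = ENNReal.ofReal C * ENNReal.ofReal (2 * R₀) := by
          rw [Real.volume_Ioo]
          congr 1
          ring
  have hfinal : ENNReal.ofReal (Real.pi * R₀^2 * ‖f z‖ ^ p)
      ≤ ENNReal.ofReal (C * (2 * R₀)) := by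
    calc ENNReal.ofReal (Real.pi * R₀^2 * ‖f z‖ ^ p)
        ≤ ENNReal.ofReal (∫ w in Metric.ball (0:ℂ) R₀, h w) := ENNReal.ofReal_le_ofReal hkey1
      _ = ∫⁻ w in Metric.ball (0:ℂ) R₀, g w := hofReal
      _ ≤ ∫⁻ w in Strip, g w := hmono
      _ = _ := htrans
      _ = _ := hTon
      _ ≤ ENNReal.ofReal C * ENNReal.ofReal (2*R₀) := hstrip
      _ = ENNReal.ofReal (C * (2*R₀)) := (ENNReal.ofReal_mul hC0).symm
  have hreal : Real.pi * R₀^2 * ‖f z‖ ^ p ≤ C * (2 * R₀) :=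
    (ENNReal.ofReal_le_ofReal_iff (by positivity)).1 hfinal
  have h5 : ‖f z‖ ^ p ≤ (C * (2 * R₀)) / (Real.pi * R₀^2) := by
    rw [le_div_iff₀ (by positivity)]
    nlinarith [hreal]
  have h2R : -z.im = 2 * R₀ := by rw [hR₀def]; ring
  rw [h2R]
  refine h5.trans (le_of_eq ?_)
  have hR₀ne : R₀ ≠ 0 := ne_of_gt hR₀
  have hπne : Real.pi ≠ 0 := ne_of_gt hπ
  field_simp
  ring

private lemma jordan_inv (θ : ℝ) (h0 : 0 < θ) (hπθ : θ < Real.pi) :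
    (Real.sin θ)⁻¹ ≤ (Real.pi/2) * (θ⁻¹ + (Real.pi - θ)⁻¹) := by
  have hπ := Real.pi_pos
  have hs : 0 < Real.sin θ := Real.sin_pos_of_pos_of_lt_pi h0 hπθ
  have hπθ' : 0 < Real.pi - θ := by linarith
  rcases le_or_gt θ (Real.pi/2) with hc | hc
  · have hj : 2/Real.pi * θ ≤ Real.sin θ := Real.mul_le_sin h0.le hc
    have h2 : (Real.sin θ)⁻¹ ≤ (2/Real.pi * θ)⁻¹ :=
      inv_anti₀ (by positivity) hj
    have h3 : (2/Real.pi * θ)⁻¹ = (Real.pi/2) * θ⁻¹ := by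
      field_simp
    have h4 : 0 ≤ (Real.pi - θ)⁻¹ := by positivity
    rw [h3] at h2
    nlinarith
  · have hj : 2/Real.pi * (Real.pi - θ) ≤ Real.sin θ := by
      rw [← Real.sin_pi_sub]
      exact Real.mul_le_sin hπθ'.le (by linarith)
    have h2 : (Real.sin θ)⁻¹ ≤ (2/Real.pi * (Real.pi - θ))⁻¹ :=
      inv_anti₀ (by positivity) hj
    have h3 : (2/Real.pi * (Real.pi - θ))⁻¹ = (Real.pi/2) * (Real.pi - θ)⁻¹ := by
      field_simp
    have h4 : 0 ≤ θ⁻¹ := by positivity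
    rw [h3] at h2
    nlinarith

private lemma aux_tendsto (a : ℝ) (ha : 0 < a) (c : ℝ) :
    Tendsto (fun r : ℝ => c * (r ^ (-a) * Real.log (Real.pi * r))) atTop (nhds 0) := by
  have hπ := Real.pi_pos
  have h1 : Tendsto (fun r : ℝ => r ^ (-a) * Real.log Real.pi) atTop (nhds 0) := by
    have := (tendsto_rpow_neg_atTop ha).mul_const (Real.log Real.pi)
    simpa using this
  have h2 : Tendsto (fun r : ℝ => r ^ (-a) * Real.log r) atTop (nhds 0) := by
    apply squeeze_zero' (g := fun r : ℝ => (2/a) * r ^ (-(a/2)))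
    · filter_upwards [Filter.eventually_ge_atTop (1:ℝ)] with r hr
      have : 0 ≤ Real.log r := Real.log_nonneg hr
      positivity
    · filter_upwards [Filter.eventually_ge_atTop (1:ℝ)] with r hr
      have hr0 : 0 < r := by linarith
      have hlog : Real.log r ≤ r ^ (a/2) / (a/2) := Real.log_le_rpow_div hr0.le (by positivity)
      have hb : r ^ (-a) * (r ^ (a/2) / (a/2)) = (2/a) * r ^ (-(a/2)) := by
        rw [div_eq_mul_inv, ← mul_assoc, ← Real.rpow_add hr0]
        rw [show -a + a/2 = -(a/2) by ring]
        ring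
      calc r ^ (-a) * Real.log r ≤ r ^ (-a) * (r ^ (a/2) / (a/2)) := by
            apply mul_le_mul_of_nonneg_left hlog (Real.rpow_nonneg hr0.le _)
        _ = (2/a) * r ^ (-(a/2)) := hb
    · have := (tendsto_rpow_neg_atTop (by positivity : (0:ℝ) < a/2)).const_mul (2/a)
      simpa using this
  have h3 : Tendsto (fun r : ℝ => r ^ (-a) * Real.log Real.pi + r ^ (-a) * Real.log r)
      atTop (nhds 0) := by
    simpa using h1.add h2
  have h4 : Tendsto (fun r : ℝ => r ^ (-a) * Real.log (Real.pi * r)) atTop (nhds 0) := by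
    apply h3.congr'
    filter_upwards [Filter.eventually_gt_atTop (0:ℝ)] with r hr
    rw [Real.log_mul (ne_of_gt hπ) (ne_of_gt hr)]
    ring
  have := h4.const_mul c
  simpa using this

/-- Proposition B.2: the integral of `|f|` over the truncated semicircular arc
of radius `r` in the lower half-plane tends to `0` as `r → ∞`. -/
theorem hardyBelow_arc_integral_tendsto_zero (p : ℝ) (hp : 1 ≤ p) (f : ℂ → ℂ)
    (hf : HardyBelow p f) :
    Filter.Tendsto
      (fun r : ℝ => ∫ θ in (1 / r)..(Real.pi - 1 / r),
        ‖f (-(r : ℂ) * Complex.exp ((θ : ℂ) * Complex.I))‖)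
      Filter.atTop (nhds 0) := by
  obtain ⟨K, hK0, hKbd⟩ := pointwise_bound p hp f hf
  have hπ := Real.pi_pos
  have hπ3 := Real.pi_gt_three
  have hp0 : (0:ℝ) < p := by linarith
  have hap : 0 < 1/p := by positivity
  have hap1 : 1/p ≤ 1 := by
    rw [div_le_one hp0]; linarith
  set A : ℝ := (K+1) ^ (1/p) * (Real.pi/2) with hAdef
  have hA0 : 0 ≤ A := by positivity
  -- imaginary part of points on the arc
  have him : ∀ r θ : ℝ, ((-(r:ℂ)) * Complex.exp ((θ:ℂ) * Complex.I)).im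
      = -(r * Real.sin θ) := by
    intro r θ
    rw [Complex.exp_mul_I]
    simp [Complex.mul_im, Complex.mul_re, Complex.add_re, Complex.add_im,
      Complex.cos_ofReal_re, Complex.sin_ofReal_re, Complex.cos_ofReal_im,
      Complex.sin_ofReal_im]
  apply squeeze_zero'
    (g := fun r : ℝ => (2*A) * (r ^ (-(1/p)) * Real.log (Real.pi * r)))
  · -- nonnegativity
    filter_upwards [Filter.eventually_ge_atTop (1:ℝ)] with r hr
    have hr0 : 0 < r := by linarith
    have hle : 1/r ≤ Real.pi - 1/r := by
      have : 1/r ≤ 1 := by rw [div_le_one hr0]; linarith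
      linarith
    exact intervalIntegral.integral_nonneg hle (fun θ _ => norm_nonneg _)
  · -- the bound
    filter_upwards [Filter.eventually_ge_atTop (1:ℝ)] with r hr
    have hr0 : 0 < r := by linarith
    have h1r : 0 < 1/r := by positivity
    have h1r1 : 1/r ≤ 1 := by rw [div_le_one hr0]; linarith
    have hle : 1/r ≤ Real.pi - 1/r := by linarith
    -- pointwise bound on the arc
    have hptwise : ∀ θ ∈ Set.Icc (1/r) (Real.pi - 1/r),
        ‖f (-(r:ℂ) * Complex.exp ((θ:ℂ) * Complex.I))‖
        ≤ A * r ^ (-(1/p)) * (θ⁻¹ + (Real.pi - θ)⁻¹) := by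
      intro θ hθ
      have hθ0 : 0 < θ := lt_of_lt_of_le h1r hθ.1
      have hθπ : θ < Real.pi := lt_of_le_of_lt hθ.2 (by linarith)
      have hs : 0 < Real.sin θ := Real.sin_pos_of_pos_of_lt_pi hθ0 hθπ
      have hrs : 0 < r * Real.sin θ := by positivity
      set w : ℂ := -(r:ℂ) * Complex.exp ((θ:ℂ) * Complex.I) with hwdef
      have hwim : w.im < 0 := by rw [hwdef, him r θ]; linarith
      have hKb := hKbd w hwim
      rw [hwdef, him r θ, neg_neg] at hKb
      -- take p-th roots
      have hx : ‖f w‖ ≤ (K / (r * Real.sin θ)) ^ (1/p) := by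
        calc ‖f w‖ = (‖f w‖ ^ p) ^ (1/p) := by
              rw [← Real.rpow_mul (norm_nonneg _), mul_one_div_cancel (ne_of_gt hp0),
                Real.rpow_one]
          _ ≤ (K / (r * Real.sin θ)) ^ (1/p) :=
              Real.rpow_le_rpow (Real.rpow_nonneg (norm_nonneg _) p) hKb (le_of_lt hap)
      have hx2 : (K / (r * Real.sin θ)) ^ (1/p) ≤ ((K+1) / (r * Real.sin θ)) ^ (1/p) := by
        apply Real.rpow_le_rpow (by positivity) _ (le_of_lt hap)
        exact (div_le_div_iff_of_pos_right hrs).2 (by linarith)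
      have hx3 : ((K+1) / (r * Real.sin θ)) ^ (1/p)
          = (K+1) ^ (1/p) * (r ^ (-(1/p)) * ((Real.sin θ)⁻¹) ^ (1/p)) := by
        rw [Real.div_rpow (by linarith : (0:ℝ) ≤ K+1) hrs.le, Real.mul_rpow hr0.le hs.le,
          Real.rpow_neg hr0.le, Real.inv_rpow hs.le, div_eq_mul_inv, mul_inv]
      have hx4 : ((Real.sin θ)⁻¹) ^ (1/p) ≤ (Real.sin θ)⁻¹ := by
        have hone : 1 ≤ (Real.sin θ)⁻¹ := (one_le_inv₀ hs).2 (Real.sin_le_one θ)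
        calc ((Real.sin θ)⁻¹) ^ (1/p) ≤ ((Real.sin θ)⁻¹) ^ (1:ℝ) :=
              Real.rpow_le_rpow_of_exponent_le hone hap1
          _ = _ := Real.rpow_one _
      have hx5 : (Real.sin θ)⁻¹ ≤ (Real.pi/2) * (θ⁻¹ + (Real.pi - θ)⁻¹) :=
        jordan_inv θ hθ0 hθπ
      have e1 : (0:ℝ) ≤ (K+1) ^ (1/p) := by positivity
      have e2 : (0:ℝ) ≤ r ^ (-(1/p)) := Real.rpow_nonneg hr0.le _
      calc ‖f w‖ ≤ ((K+1) / (r * Real.sin θ)) ^ (1/p) := hx.trans hx2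
        _ = (K+1) ^ (1/p) * (r ^ (-(1/p)) * ((Real.sin θ)⁻¹) ^ (1/p)) := hx3
        _ ≤ (K+1) ^ (1/p) * (r ^ (-(1/p)) * ((Real.pi/2) * (θ⁻¹ + (Real.pi - θ)⁻¹))) := by
            apply mul_le_mul_of_nonneg_left _ e1
            exact mul_le_mul_of_nonneg_left (hx4.trans hx5) e2
        _ = A * r ^ (-(1/p)) * (θ⁻¹ + (Real.pi - θ)⁻¹) := by rw [hAdef]; ring
    -- integrability of the left side
    have hcontf : ContinuousOn
        (fun θ : ℝ => ‖f (-(r:ℂ) * Complex.exp ((θ:ℂ) * Complex.I))‖)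
        (Set.uIcc (1/r) (Real.pi - 1/r)) := by
      rw [Set.uIcc_of_le hle]
      intro θ hθ
      apply ContinuousAt.continuousWithinAt
      have hθ0 : 0 < θ := lt_of_lt_of_le h1r hθ.1
      have hθπ : θ < Real.pi := lt_of_le_of_lt hθ.2 (by linarith)
      have hs : 0 < Real.sin θ := Real.sin_pos_of_pos_of_lt_pi hθ0 hθπ
      have hwim : ((-(r:ℂ)) * Complex.exp ((θ:ℂ) * Complex.I)).im < 0 := by
        rw [him r θ]
        have : 0 < r * Real.sin θ := by positivity
        linarith
      have hc : ContinuousAt (fun x : ℝ => -(r:ℂ) * Complex.exp ((x:ℂ) * Complex.I)) θ := by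
        fun_prop
      exact (ContinuousAt.comp (x := θ) (g := f)
        (f := fun x : ℝ => -(r:ℂ) * Complex.exp ((x:ℂ) * Complex.I))
        ((hf.1 _ hwim).continuousAt) hc).norm
    have hint_f : IntervalIntegrable
        (fun θ : ℝ => ‖f (-(r:ℂ) * Complex.exp ((θ:ℂ) * Complex.I))‖)
        volume (1/r) (Real.pi - 1/r) := hcontf.intervalIntegrable
    -- integrability of the right side
    have hnz1 : ∀ θ ∈ Set.Icc (1/r) (Real.pi - 1/r), θ ≠ 0 :=
      fun θ hθ => ne_of_gt (lt_of_lt_of_le h1r hθ.1)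
    have hnz2 : ∀ θ ∈ Set.Icc (1/r) (Real.pi - 1/r), Real.pi - θ ≠ 0 := by
      intro θ hθ
      have : θ < Real.pi := lt_of_le_of_lt hθ.2 (by linarith)
      exact ne_of_gt (by linarith)
    have hia : IntervalIntegrable (fun θ : ℝ => θ⁻¹) volume (1/r) (Real.pi - 1/r) := by
      apply ContinuousOn.intervalIntegrable
      rw [Set.uIcc_of_le hle]
      exact continuousOn_id.inv₀ hnz1
    have hib : IntervalIntegrable (fun θ : ℝ => (Real.pi - θ)⁻¹) volume (1/r)
        (Real.pi - 1/r) := by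
      apply ContinuousOn.intervalIntegrable
      rw [Set.uIcc_of_le hle]
      exact (continuousOn_const.sub continuousOn_id).inv₀ hnz2
    have hint_g : IntervalIntegrable
        (fun θ : ℝ => A * r ^ (-(1/p)) * (θ⁻¹ + (Real.pi - θ)⁻¹))
        volume (1/r) (Real.pi - 1/r) := ((hia.add hib).const_mul _)
    have hmono := intervalIntegral.integral_mono_on hle hint_f hint_g hptwise
    -- compute the comparison integral
    have h0notin : (0:ℝ) ∉ Set.uIcc (1/r) (Real.pi - 1/r) := by
      rw [Set.uIcc_of_le hle]
      intro hmem
      exact absurd hmem.1 (not_le.2 h1r)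
    have hint1 : ∫ θ in (1/r)..(Real.pi - 1/r), θ⁻¹
        = Real.log ((Real.pi - 1/r)/(1/r)) := integral_inv h0notin
    have hint2 : ∫ θ in (1/r)..(Real.pi - 1/r), (Real.pi - θ)⁻¹
        = Real.log ((Real.pi - 1/r)/(1/r)) := by
      have hcs := intervalIntegral.integral_comp_sub_left (a := 1/r)
        (b := Real.pi - 1/r) (fun u : ℝ => u⁻¹) Real.pi
      rw [show Real.pi - (Real.pi - 1/r) = 1/r by ring] at hcs
      rw [hcs]
      exact integral_inv h0notin
    have hsum : (∫ θ in (1/r)..(Real.pi - 1/r),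
          A * r ^ (-(1/p)) * (θ⁻¹ + (Real.pi - θ)⁻¹))
        = A * r ^ (-(1/p)) * (2 * Real.log ((Real.pi - 1/r)/(1/r))) := by
      rw [intervalIntegral.integral_const_mul, intervalIntegral.integral_add hia hib,
        hint1, hint2]
      ring
    have hlog : Real.log ((Real.pi - 1/r)/(1/r)) ≤ Real.log (Real.pi * r) := by
      have heq : (Real.pi - 1/r)/(1/r) = Real.pi * r - 1 := by
        field_simp
      rw [heq]
      apply Real.log_le_log (by nlinarith) (by nlinarith)
    have e2 : (0:ℝ) ≤ r ^ (-(1/p)) := Real.rpow_nonneg hr0.le _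
    calc (∫ θ in (1/r)..(Real.pi - 1/r),
          ‖f (-(r:ℂ) * Complex.exp ((θ:ℂ) * Complex.I))‖)
        ≤ A * r ^ (-(1/p)) * (2 * Real.log ((Real.pi - 1/r)/(1/r))) := by
          rw [← hsum]; exact hmono
      _ = (2*A) * (r ^ (-(1/p)) * Real.log ((Real.pi - 1/r)/(1/r))) := by ring
      _ ≤ (2*A) * (r ^ (-(1/p)) * Real.log (Real.pi * r)) := by
          apply mul_le_mul_of_nonneg_left _ (by positivity)
          exact mul_le_mul_of_nonneg_left hlog e2
  · exact aux_tendsto (1/p) hap (2*A)
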